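/- For p ∈ (-∞,-1] ∪ (0,∞), the inequality (2p + (p+3)cos t)/((3p+1) + 2cos t) < sin t / t holds for all t ∈ (0, π/2) if and only if 0 < p ≤ 1/(π-3). -/

import Mathlib

open Real Set

set_option maxHeartbeats 1000000

private lemma aux_pos {f f' : ℝ → ℝ} (hd : ∀ y : ℝ, HasDerivAt f (f' y) y) (h0 : f 0 = 0)
    (hf' : ∀ y : ℝ, 0 < y → 0 ≤ f' y) {x : ℝ} (hx : 0 ≤ x) : 0 ≤ f x := by
  have hm : MonotoneOn f (Set.Ici (0:ℝ)) := by
    apply monotoneOn_of_deriv_nonneg (convex_Ici 0)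
        (fun y _ => (hd y).continuousAt.continuousWithinAt)
        (fun y _ => (hd y).differentiableAt.differentiableWithinAt)
    intro y hy
    rw [interior_Ici] at hy
    rw [(hd y).deriv]
    exact hf' y hy
  have h2 : f 0 ≤ f x := hm Set.self_mem_Ici hx hx
  linarith [h0 ▸ h2]

lemma sin_le1 {x : ℝ} (hx : 0 ≤ x) : Real.sin x ≤ x := by
  have hd : ∀ y : ℝ, HasDerivAt (fun w : ℝ => (w) - Real.sin w) ((1) - Real.cos y) y := by
    intro y
    exact ((hasDerivAt_id y).sub (Real.hasDerivAt_sin y)).congr_deriv (by ring)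
  have hf' : ∀ y : ℝ, 0 < y → 0 ≤ (1) - Real.cos y := by
    intro y hy
    nlinarith [Real.cos_le_one y]
  have key : (0:ℝ) ≤ (x) - Real.sin x := aux_pos hd (by norm_num) hf' hx
  linarith

lemma sin_ge3 {x : ℝ} (hx : 0 ≤ x) : x - x^3/6 ≤ Real.sin x := by
  have hd : ∀ y : ℝ, HasDerivAt (fun w : ℝ => Real.sin w - (w - w^3/6)) (Real.cos y - (1 - (3 * y^2 / 6))) y := by
    intro y
    have h3 : HasDerivAt (fun w : ℝ => w ^ 3) (3 * y ^ 2) y := by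
      simpa using hasDerivAt_pow 3 y
    exact ((Real.hasDerivAt_sin y).sub ((hasDerivAt_id y).sub (h3.div_const 6))).congr_deriv (by ring)
  have hf' : ∀ y : ℝ, 0 < y → 0 ≤ Real.cos y - (1 - (3 * y^2 / 6)) := by
    intro y hy
    nlinarith [Real.one_sub_sq_div_two_le_cos (x := y)]
  have key : (0:ℝ) ≤ Real.sin x - (x - x^3/6) := aux_pos hd (by norm_num) hf' hx
  linarith

lemma cos_le4 {x : ℝ} (hx : 0 ≤ x) : Real.cos x ≤ 1 - x^2/2 + x^4/24 := by
  have hd : ∀ y : ℝ, HasDerivAt (fun w : ℝ => (1 - w^2/2 + w^4/24) - Real.cos w) ((-(2 * y / 2) + (4 * y^3 / 24)) - (-Real.sin y)) y := by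
    intro y
    have h2 : HasDerivAt (fun w : ℝ => w ^ 2) (2 * y) y := by
      simpa using hasDerivAt_pow 2 y
    have h4 : HasDerivAt (fun w : ℝ => w ^ 4) (4 * y ^ 3) y := by
      simpa using hasDerivAt_pow 4 y
    exact ((((hasDerivAt_const y (1:ℝ)).sub (h2.div_const 2)).add (h4.div_const 24)).sub (Real.hasDerivAt_cos y)).congr_deriv (by ring)
  have hf' : ∀ y : ℝ, 0 < y → 0 ≤ (-(2 * y / 2) + (4 * y^3 / 24)) - (-Real.sin y) := by
    intro y hy
    nlinarith [sin_ge3 hy.le]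
  have key : (0:ℝ) ≤ (1 - x^2/2 + x^4/24) - Real.cos x := aux_pos hd (by norm_num) hf' hx
  linarith

lemma sin_le5 {x : ℝ} (hx : 0 ≤ x) : Real.sin x ≤ x - x^3/6 + x^5/120 := by
  have hd : ∀ y : ℝ, HasDerivAt (fun w : ℝ => (w - w^3/6 + w^5/120) - Real.sin w) ((1 - (3 * y^2 / 6) + (5 * y^4 / 120)) - Real.cos y) y := by
    intro y
    have h3 : HasDerivAt (fun w : ℝ => w ^ 3) (3 * y ^ 2) y := by
      simpa using hasDerivAt_pow 3 y
    have h5 : HasDerivAt (fun w : ℝ => w ^ 5) (5 * y ^ 4) y := by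
      simpa using hasDerivAt_pow 5 y
    exact ((((hasDerivAt_id y).sub (h3.div_const 6)).add (h5.div_const 120)).sub (Real.hasDerivAt_sin y)).congr_deriv (by ring)
  have hf' : ∀ y : ℝ, 0 < y → 0 ≤ (1 - (3 * y^2 / 6) + (5 * y^4 / 120)) - Real.cos y := by
    intro y hy
    nlinarith [cos_le4 hy.le]
  have key : (0:ℝ) ≤ (x - x^3/6 + x^5/120) - Real.sin x := aux_pos hd (by norm_num) hf' hx
  linarith

lemma cos_ge6 {x : ℝ} (hx : 0 ≤ x) : 1 - x^2/2 + x^4/24 - x^6/720 ≤ Real.cos x := by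
  have hd : ∀ y : ℝ, HasDerivAt (fun w : ℝ => Real.cos w - (1 - w^2/2 + w^4/24 - w^6/720)) ((-Real.sin y) - (-(2 * y / 2) + (4 * y^3 / 24) - (6 * y^5 / 720))) y := by
    intro y
    have h2 : HasDerivAt (fun w : ℝ => w ^ 2) (2 * y) y := by
      simpa using hasDerivAt_pow 2 y
    have h4 : HasDerivAt (fun w : ℝ => w ^ 4) (4 * y ^ 3) y := by
      simpa using hasDerivAt_pow 4 y
    have h6 : HasDerivAt (fun w : ℝ => w ^ 6) (6 * y ^ 5) y := by
      simpa using hasDerivAt_pow 6 y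
    exact ((Real.hasDerivAt_cos y).sub ((((hasDerivAt_const y (1:ℝ)).sub (h2.div_const 2)).add (h4.div_const 24)).sub (h6.div_const 720))).congr_deriv (by ring)
  have hf' : ∀ y : ℝ, 0 < y → 0 ≤ (-Real.sin y) - (-(2 * y / 2) + (4 * y^3 / 24) - (6 * y^5 / 720)) := by
    intro y hy
    nlinarith [sin_le5 hy.le]
  have key : (0:ℝ) ≤ Real.cos x - (1 - x^2/2 + x^4/24 - x^6/720) := aux_pos hd (by norm_num) hf' hx
  linarith

lemma sin_ge7 {x : ℝ} (hx : 0 ≤ x) : x - x^3/6 + x^5/120 - x^7/5040 ≤ Real.sin x := by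
  have hd : ∀ y : ℝ, HasDerivAt (fun w : ℝ => Real.sin w - (w - w^3/6 + w^5/120 - w^7/5040)) (Real.cos y - (1 - (3 * y^2 / 6) + (5 * y^4 / 120) - (7 * y^6 / 5040))) y := by
    intro y
    have h3 : HasDerivAt (fun w : ℝ => w ^ 3) (3 * y ^ 2) y := by
      simpa using hasDerivAt_pow 3 y
    have h5 : HasDerivAt (fun w : ℝ => w ^ 5) (5 * y ^ 4) y := by
      simpa using hasDerivAt_pow 5 y
    have h7 : HasDerivAt (fun w : ℝ => w ^ 7) (7 * y ^ 6) y := by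
      simpa using hasDerivAt_pow 7 y
    exact ((Real.hasDerivAt_sin y).sub ((((hasDerivAt_id y).sub (h3.div_const 6)).add (h5.div_const 120)).sub (h7.div_const 5040))).congr_deriv (by ring)
  have hf' : ∀ y : ℝ, 0 < y → 0 ≤ Real.cos y - (1 - (3 * y^2 / 6) + (5 * y^4 / 120) - (7 * y^6 / 5040)) := by
    intro y hy
    nlinarith [cos_ge6 hy.le]
  have key : (0:ℝ) ≤ Real.sin x - (x - x^3/6 + x^5/120 - x^7/5040) := aux_pos hd (by norm_num) hf' hx
  linarith

lemma cos_le8 {x : ℝ} (hx : 0 ≤ x) : Real.cos x ≤ 1 - x^2/2 + x^4/24 - x^6/720 + x^8/40320 := by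
  have hd : ∀ y : ℝ, HasDerivAt (fun w : ℝ => (1 - w^2/2 + w^4/24 - w^6/720 + w^8/40320) - Real.cos w) ((-(2 * y / 2) + (4 * y^3 / 24) - (6 * y^5 / 720) + (8 * y^7 / 40320)) - (-Real.sin y)) y := by
    intro y
    have h2 : HasDerivAt (fun w : ℝ => w ^ 2) (2 * y) y := by
      simpa using hasDerivAt_pow 2 y
    have h4 : HasDerivAt (fun w : ℝ => w ^ 4) (4 * y ^ 3) y := by
      simpa using hasDerivAt_pow 4 y
    have h6 : HasDerivAt (fun w : ℝ => w ^ 6) (6 * y ^ 5) y := by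
      simpa using hasDerivAt_pow 6 y
    have h8 : HasDerivAt (fun w : ℝ => w ^ 8) (8 * y ^ 7) y := by
      simpa using hasDerivAt_pow 8 y
    exact ((((((hasDerivAt_const y (1:ℝ)).sub (h2.div_const 2)).add (h4.div_const 24)).sub (h6.div_const 720)).add (h8.div_const 40320)).sub (Real.hasDerivAt_cos y)).congr_deriv (by ring)
  have hf' : ∀ y : ℝ, 0 < y → 0 ≤ (-(2 * y / 2) + (4 * y^3 / 24) - (6 * y^5 / 720) + (8 * y^7 / 40320)) - (-Real.sin y) := by
    intro y hy
    nlinarith [sin_ge7 hy.le]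
  have key : (0:ℝ) ≤ (1 - x^2/2 + x^4/24 - x^6/720 + x^8/40320) - Real.cos x := aux_pos hd (by norm_num) hf' hx
  linarith

lemma sin_le9 {x : ℝ} (hx : 0 ≤ x) : Real.sin x ≤ x - x^3/6 + x^5/120 - x^7/5040 + x^9/362880 := by
  have hd : ∀ y : ℝ, HasDerivAt (fun w : ℝ => (w - w^3/6 + w^5/120 - w^7/5040 + w^9/362880) - Real.sin w) ((1 - (3 * y^2 / 6) + (5 * y^4 / 120) - (7 * y^6 / 5040) + (9 * y^8 / 362880)) - Real.cos y) y := by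
    intro y
    have h3 : HasDerivAt (fun w : ℝ => w ^ 3) (3 * y ^ 2) y := by
      simpa using hasDerivAt_pow 3 y
    have h5 : HasDerivAt (fun w : ℝ => w ^ 5) (5 * y ^ 4) y := by
      simpa using hasDerivAt_pow 5 y
    have h7 : HasDerivAt (fun w : ℝ => w ^ 7) (7 * y ^ 6) y := by
      simpa using hasDerivAt_pow 7 y
    have h9 : HasDerivAt (fun w : ℝ => w ^ 9) (9 * y ^ 8) y := by
      simpa using hasDerivAt_pow 9 y
    exact ((((((hasDerivAt_id y).sub (h3.div_const 6)).add (h5.div_const 120)).sub (h7.div_const 5040)).add (h9.div_const 362880)).sub (Real.hasDerivAt_sin y)).congr_deriv (by ring)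
  have hf' : ∀ y : ℝ, 0 < y → 0 ≤ (1 - (3 * y^2 / 6) + (5 * y^4 / 120) - (7 * y^6 / 5040) + (9 * y^8 / 362880)) - Real.cos y := by
    intro y hy
    nlinarith [cos_le8 hy.le]
  have key : (0:ℝ) ≤ (x - x^3/6 + x^5/120 - x^7/5040 + x^9/362880) - Real.sin x := aux_pos hd (by norm_num) hf' hx
  linarith

lemma cos_ge10 {x : ℝ} (hx : 0 ≤ x) : 1 - x^2/2 + x^4/24 - x^6/720 + x^8/40320 - x^10/3628800 ≤ Real.cos x := by
  have hd : ∀ y : ℝ, HasDerivAt (fun w : ℝ => Real.cos w - (1 - w^2/2 + w^4/24 - w^6/720 + w^8/40320 - w^10/3628800)) ((-Real.sin y) - (-(2 * y / 2) + (4 * y^3 / 24) - (6 * y^5 / 720) + (8 * y^7 / 40320) - (10 * y^9 / 3628800))) y := by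
    intro y
    have h2 : HasDerivAt (fun w : ℝ => w ^ 2) (2 * y) y := by
      simpa using hasDerivAt_pow 2 y
    have h4 : HasDerivAt (fun w : ℝ => w ^ 4) (4 * y ^ 3) y := by
      simpa using hasDerivAt_pow 4 y
    have h6 : HasDerivAt (fun w : ℝ => w ^ 6) (6 * y ^ 5) y := by
      simpa using hasDerivAt_pow 6 y
    have h8 : HasDerivAt (fun w : ℝ => w ^ 8) (8 * y ^ 7) y := by
      simpa using hasDerivAt_pow 8 y
    have h10 : HasDerivAt (fun w : ℝ => w ^ 10) (10 * y ^ 9) y := by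
      simpa using hasDerivAt_pow 10 y
    exact ((Real.hasDerivAt_cos y).sub ((((((hasDerivAt_const y (1:ℝ)).sub (h2.div_const 2)).add (h4.div_const 24)).sub (h6.div_const 720)).add (h8.div_const 40320)).sub (h10.div_const 3628800))).congr_deriv (by ring)
  have hf' : ∀ y : ℝ, 0 < y → 0 ≤ (-Real.sin y) - (-(2 * y / 2) + (4 * y^3 / 24) - (6 * y^5 / 720) + (8 * y^7 / 40320) - (10 * y^9 / 3628800)) := by
    intro y hy
    nlinarith [sin_le9 hy.le]
  have key : (0:ℝ) ≤ Real.cos x - (1 - x^2/2 + x^4/24 - x^6/720 + x^8/40320 - x^10/3628800) := aux_pos hd (by norm_num) hf' hx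
  linarith

lemma sin_ge11 {x : ℝ} (hx : 0 ≤ x) : x - x^3/6 + x^5/120 - x^7/5040 + x^9/362880 - x^11/39916800 ≤ Real.sin x := by
  have hd : ∀ y : ℝ, HasDerivAt (fun w : ℝ => Real.sin w - (w - w^3/6 + w^5/120 - w^7/5040 + w^9/362880 - w^11/39916800)) (Real.cos y - (1 - (3 * y^2 / 6) + (5 * y^4 / 120) - (7 * y^6 / 5040) + (9 * y^8 / 362880) - (11 * y^10 / 39916800))) y := by
    intro y
    have h3 : HasDerivAt (fun w : ℝ => w ^ 3) (3 * y ^ 2) y := by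
      simpa using hasDerivAt_pow 3 y
    have h5 : HasDerivAt (fun w : ℝ => w ^ 5) (5 * y ^ 4) y := by
      simpa using hasDerivAt_pow 5 y
    have h7 : HasDerivAt (fun w : ℝ => w ^ 7) (7 * y ^ 6) y := by
      simpa using hasDerivAt_pow 7 y
    have h9 : HasDerivAt (fun w : ℝ => w ^ 9) (9 * y ^ 8) y := by
      simpa using hasDerivAt_pow 9 y
    have h11 : HasDerivAt (fun w : ℝ => w ^ 11) (11 * y ^ 10) y := by
      simpa using hasDerivAt_pow 11 y
    exact ((Real.hasDerivAt_sin y).sub ((((((hasDerivAt_id y).sub (h3.div_const 6)).add (h5.div_const 120)).sub (h7.div_const 5040)).add (h9.div_const 362880)).sub (h11.div_const 39916800))).congr_deriv (by ring)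
  have hf' : ∀ y : ℝ, 0 < y → 0 ≤ Real.cos y - (1 - (3 * y^2 / 6) + (5 * y^4 / 120) - (7 * y^6 / 5040) + (9 * y^8 / 362880) - (11 * y^10 / 39916800)) := by
    intro y hy
    nlinarith [cos_ge10 hy.le]
  have key : (0:ℝ) ≤ Real.sin x - (x - x^3/6 + x^5/120 - x^7/5040 + x^9/362880 - x^11/39916800) := aux_pos hd (by norm_num) hf' hx
  linarith

lemma cos_le12 {x : ℝ} (hx : 0 ≤ x) : Real.cos x ≤ 1 - x^2/2 + x^4/24 - x^6/720 + x^8/40320 - x^10/3628800 + x^12/479001600 := by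
  have hd : ∀ y : ℝ, HasDerivAt (fun w : ℝ => (1 - w^2/2 + w^4/24 - w^6/720 + w^8/40320 - w^10/3628800 + w^12/479001600) - Real.cos w) ((-(2 * y / 2) + (4 * y^3 / 24) - (6 * y^5 / 720) + (8 * y^7 / 40320) - (10 * y^9 / 3628800) + (12 * y^11 / 479001600)) - (-Real.sin y)) y := by
    intro y
    have h2 : HasDerivAt (fun w : ℝ => w ^ 2) (2 * y) y := by
      simpa using hasDerivAt_pow 2 y
    have h4 : HasDerivAt (fun w : ℝ => w ^ 4) (4 * y ^ 3) y := by
      simpa using hasDerivAt_pow 4 y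
    have h6 : HasDerivAt (fun w : ℝ => w ^ 6) (6 * y ^ 5) y := by
      simpa using hasDerivAt_pow 6 y
    have h8 : HasDerivAt (fun w : ℝ => w ^ 8) (8 * y ^ 7) y := by
      simpa using hasDerivAt_pow 8 y
    have h10 : HasDerivAt (fun w : ℝ => w ^ 10) (10 * y ^ 9) y := by
      simpa using hasDerivAt_pow 10 y
    have h12 : HasDerivAt (fun w : ℝ => w ^ 12) (12 * y ^ 11) y := by
      simpa using hasDerivAt_pow 12 y
    exact ((((((((hasDerivAt_const y (1:ℝ)).sub (h2.div_const 2)).add (h4.div_const 24)).sub (h6.div_const 720)).add (h8.div_const 40320)).sub (h10.div_const 3628800)).add (h12.div_const 479001600)).sub (Real.hasDerivAt_cos y)).congr_deriv (by ring)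
  have hf' : ∀ y : ℝ, 0 < y → 0 ≤ (-(2 * y / 2) + (4 * y^3 / 24) - (6 * y^5 / 720) + (8 * y^7 / 40320) - (10 * y^9 / 3628800) + (12 * y^11 / 479001600)) - (-Real.sin y) := by
    intro y hy
    nlinarith [sin_ge11 hy.le]
  have key : (0:ℝ) ≤ (1 - x^2/2 + x^4/24 - x^6/720 + x^8/40320 - x^10/3628800 + x^12/479001600) - Real.cos x := aux_pos hd (by norm_num) hf' hx
  linarith

/-- Cusa–Huygens (strict): `3 sin t < t (2 + cos t)` for `0 < t ≤ 1.6`. -/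
lemma cusa {t : ℝ} (h0 : 0 < t) (ht : t ≤ 1.6) : 3 * Real.sin t < t * (2 + Real.cos t) := by
  have hs := sin_le5 h0.le
  have hc := cos_ge6 h0.le
  have htc : t * (1 - t^2/2 + t^4/24 - t^6/720) ≤ t * Real.cos t :=
    mul_le_mul_of_nonneg_left hc h0.le
  have h12 : 0 < t^5 * (12 - t^2) := mul_pos (pow_pos h0 5) (by nlinarith)
  nlinarith [hs, htc, h12]

noncomputable def Gfun : ℝ → ℝ :=
  fun t => π * Real.sin t + (π - 3) * Real.sin (2*t) - 2*t - (3*π - 8) * (t * Real.cos t)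

noncomputable def G1fun : ℝ → ℝ :=
  fun y => π * Real.cos y + (π - 3) * (2 * Real.cos (2*y)) - 2 - (3*π - 8) * (Real.cos y - y * Real.sin y)

lemma Gfun_hasDeriv (y : ℝ) : HasDerivAt Gfun (G1fun y) y := by
  have h2y : HasDerivAt (fun t : ℝ => 2*t) 2 y := by
    simpa using (hasDerivAt_id y).const_mul (2:ℝ)
  have hsin2 : HasDerivAt (fun t : ℝ => Real.sin (2*t)) (Real.cos (2*y) * 2) y :=
    (Real.hasDerivAt_sin (2*y)).comp y h2y
  have h1 : HasDerivAt (fun t : ℝ => π * Real.sin t) (π * Real.cos y) y :=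
    (Real.hasDerivAt_sin y).const_mul π
  have h2 : HasDerivAt (fun t : ℝ => (π - 3) * Real.sin (2*t)) ((π - 3) * (Real.cos (2*y) * 2)) y :=
    hsin2.const_mul (π - 3)
  have h3 : HasDerivAt (fun t : ℝ => 2*t) 2 y := h2y
  have h4 : HasDerivAt (fun t : ℝ => (3*π - 8) * (t * Real.cos t))
      ((3*π - 8) * (1 * Real.cos y + y * (-Real.sin y))) y :=
    ((hasDerivAt_id y).mul (Real.hasDerivAt_cos y)).const_mul (3*π - 8)
  exact (((h1.add h2).sub h3).sub h4).congr_deriv (by unfold G1fun; ring)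

lemma G1fun_hasDeriv (y : ℝ) : HasDerivAt G1fun
    ((5*π - 16) * Real.sin y - 4*(π - 3) * Real.sin (2*y) + (3*π - 8) * (y * Real.cos y)) y := by
  have h2y : HasDerivAt (fun t : ℝ => 2*t) 2 y := by
    simpa using (hasDerivAt_id y).const_mul (2:ℝ)
  have hcos2 : HasDerivAt (fun t : ℝ => Real.cos (2*t)) (-Real.sin (2*y) * 2) y :=
    (Real.hasDerivAt_cos (2*y)).comp y h2y
  have h1 : HasDerivAt (fun t : ℝ => π * Real.cos t) (π * (-Real.sin y)) y :=
    (Real.hasDerivAt_cos y).const_mul π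
  have h2 : HasDerivAt (fun t : ℝ => (π - 3) * (2 * Real.cos (2*t)))
      ((π - 3) * (2 * (-Real.sin (2*y) * 2))) y := (hcos2.const_mul 2).const_mul (π - 3)
  have h3 : HasDerivAt (fun t : ℝ => (2:ℝ)) 0 y := hasDerivAt_const y 2
  have h4 : HasDerivAt (fun t : ℝ => (3*π - 8) * (Real.cos t - t * Real.sin t))
      ((3*π - 8) * (-Real.sin y - (1 * Real.sin y + y * Real.cos y))) y :=
    ((Real.hasDerivAt_cos y).sub ((hasDerivAt_id y).mul (Real.hasDerivAt_sin y))).const_mul (3*π - 8)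
  exact (((h1.add h2).sub h3).sub h4).congr_deriv (by ring)

/-- Second derivative of `G` is negative on `[1.4, 1.5707964]`. -/
lemma G2neg {y : ℝ} (h1 : 1.4 ≤ y) (h2 : y ≤ 1.5707964) :
    (5*π - 16) * Real.sin y - 4*(π - 3) * Real.sin (2*y) + (3*π - 8) * (y * Real.cos y) < 0 := by
  have hπ1 : (3.141592 : ℝ) < π := pi_gt_d6
  have hπ2 : π < 3.141593 := pi_lt_d6
  have hy0 : (0:ℝ) < y := by linarith
  have hs7 : y - y^3/6 + y^5/120 - y^7/5040 ≤ Real.sin y := sin_ge7 hy0.le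
  have hs11 : (2*y) - (2*y)^3/6 + (2*y)^5/120 - (2*y)^7/5040 + (2*y)^9/362880 - (2*y)^11/39916800
      ≤ Real.sin (2*y) := sin_ge11 (by linarith)
  have hc8 : Real.cos y ≤ 1 - y^2/2 + y^4/24 - y^6/720 + y^8/40320 := cos_le8 hy0.le
  have e1 : (5*π - 16) * Real.sin y ≤ (5*π - 16) * (y - y^3/6 + y^5/120 - y^7/5040) :=
    mul_le_mul_of_nonpos_left hs7 (by nlinarith)
  have e2 : -4*(π - 3) * Real.sin (2*y) ≤ -4*(π - 3) *
      ((2*y) - (2*y)^3/6 + (2*y)^5/120 - (2*y)^7/5040 + (2*y)^9/362880 - (2*y)^11/39916800) :=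
    mul_le_mul_of_nonpos_left hs11 (by nlinarith)
  have e3 : (3*π - 8) * (y * Real.cos y) ≤ (3*π - 8) *
      (y * (1 - y^2/2 + y^4/24 - y^6/720 + y^8/40320)) :=
    mul_le_mul_of_nonneg_left (mul_le_mul_of_nonneg_left hc8 hy0.le) (by nlinarith)
  -- the polynomial upper bound equals y^3 * R (y^2)
  have hv1 : (1.96:ℝ) ≤ y^2 := by nlinarith
  have hv2 : y^2 ≤ 2.4675 := by nlinarith
  have hv4 : y^4 ≤ 2.4675^2 := by nlinarith [sq_nonneg (y^2 - 2.4675)]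
  have hv6 : (1.96:ℝ)^3 ≤ y^6 := by nlinarith [sq_nonneg (y^2 - 1.96), sq_nonneg y]
  have hv8 : y^8 ≤ 2.4675^4 := by nlinarith [sq_nonneg (y^4 - 2.4675^2), sq_nonneg (y^2)]
  have hR : (9*π - 28)/3 + (328 - 108*π)/120 * y^2 + (486*π - 1464)/5040 * y^4
      + (6072 - 2021*π)/362880 * y^6 + 8192*(π - 3)/39916800 * y^8 < 0 := by
    linarith [mul_nonneg (by linarith : (0:ℝ) ≤ 108*π - 328) (by linarith : (0:ℝ) ≤ y^2 - 1.96),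
      mul_nonneg (by linarith : (0:ℝ) ≤ 486*π - 1464) (by nlinarith : (0:ℝ) ≤ 2.4675^2 - y^4),
      mul_nonneg (by linarith : (0:ℝ) ≤ 2021*π - 6072) (by nlinarith : (0:ℝ) ≤ y^6 - 1.96^3),
      mul_nonneg (by linarith : (0:ℝ) ≤ 8192*π - 24576) (by nlinarith : (0:ℝ) ≤ 2.4675^4 - y^8)]
  have hWR : (5*π - 16) * (y - y^3/6 + y^5/120 - y^7/5040)
      - 4*(π - 3) * ((2*y) - (2*y)^3/6 + (2*y)^5/120 - (2*y)^7/5040 + (2*y)^9/362880 - (2*y)^11/39916800)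
      + (3*π - 8) * (y * (1 - y^2/2 + y^4/24 - y^6/720 + y^8/40320))
      = y^3 * ((9*π - 28)/3 + (328 - 108*π)/120 * y^2 + (486*π - 1464)/5040 * y^4
        + (6072 - 2021*π)/362880 * y^6 + 8192*(π - 3)/39916800 * y^8) := by ring
  have hW : y^3 * ((9*π - 28)/3 + (328 - 108*π)/120 * y^2 + (486*π - 1464)/5040 * y^4
      + (6072 - 2021*π)/362880 * y^6 + 8192*(π - 3)/39916800 * y^8) < 0 :=
    mul_neg_of_pos_of_neg (pow_pos hy0 3) hR
  linarith [e1, e2, e3, hW, hWR]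

/-- `G > 0` on `(0, 1.4]`. -/
lemma Gpos_low {t : ℝ} (h0 : 0 < t) (h14 : t ≤ 1.4) : 0 < Gfun t := by
  have hπ1 : (3.141592 : ℝ) < π := pi_gt_d6
  have hπ2 : π < 3.141593 := pi_lt_d6
  have hs7 : t - t^3/6 + t^5/120 - t^7/5040 ≤ Real.sin t := sin_ge7 h0.le
  have hs11 : (2*t) - (2*t)^3/6 + (2*t)^5/120 - (2*t)^7/5040 + (2*t)^9/362880 - (2*t)^11/39916800
      ≤ Real.sin (2*t) := sin_ge11 (by linarith)
  have hc8 : Real.cos t ≤ 1 - t^2/2 + t^4/24 - t^6/720 + t^8/40320 := cos_le8 h0.le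
  have e1 : π * (t - t^3/6 + t^5/120 - t^7/5040) ≤ π * Real.sin t :=
    mul_le_mul_of_nonneg_left hs7 pi_pos.le
  have e2 : (π - 3) * ((2*t) - (2*t)^3/6 + (2*t)^5/120 - (2*t)^7/5040 + (2*t)^9/362880 - (2*t)^11/39916800)
      ≤ (π - 3) * Real.sin (2*t) := mul_le_mul_of_nonneg_left hs11 (by nlinarith)
  have e3 : (3*π - 8) * (t * Real.cos t) ≤ (3*π - 8) *
      (t * (1 - t^2/2 + t^4/24 - t^6/720 + t^8/40320)) :=
    mul_le_mul_of_nonneg_left (mul_le_mul_of_nonneg_left hc8 h0.le) (by nlinarith)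
  have ht2 : t^2 ≤ 1.96 := by nlinarith
  have ht4 : t^4 ≤ 1.96^2 := by nlinarith [sq_nonneg t, sq_nonneg (t^2 - 1.96)]
  have ht6 : t^6 ≤ 1.96^3 := by nlinarith [sq_nonneg t, sq_nonneg (t^2), sq_nonneg (t^2 - 1.96)]
  have hQ : 0 < (9*π - 28)/60 + (328 - 108*π)/5040 * t^2 + (485*π - 1464)/362880 * t^4
      - 2048*(π - 3)/39916800 * t^6 := by
    linarith [mul_nonneg (by linarith : (0:ℝ) ≤ 108*π - 328) (by linarith : (0:ℝ) ≤ 1.96 - t^2),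
      mul_nonneg (by linarith : (0:ℝ) ≤ 2048*π - 6144) (by nlinarith : (0:ℝ) ≤ 1.96^3 - t^6),
      mul_nonneg (by linarith : (0:ℝ) ≤ 485*π - 1464) (sq_nonneg (t^2))]
  have hEpos : 0 < t^5 * ((9*π - 28)/60 + (328 - 108*π)/5040 * t^2 + (485*π - 1464)/362880 * t^4
      - 2048*(π - 3)/39916800 * t^6) := mul_pos (pow_pos h0 5) hQ
  have hEeq : t^5 * ((9*π - 28)/60 + (328 - 108*π)/5040 * t^2 + (485*π - 1464)/362880 * t^4
      - 2048*(π - 3)/39916800 * t^6)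
      = π * (t - t^3/6 + t^5/120 - t^7/5040)
        + (π - 3) * ((2*t) - (2*t)^3/6 + (2*t)^5/120 - (2*t)^7/5040 + (2*t)^9/362880 - (2*t)^11/39916800)
        - 2*t - (3*π - 8) * (t * (1 - t^2/2 + t^4/24 - t^6/720 + t^8/40320)) := by ring
  simp only [Gfun]
  linarith [e1, e2, e3, hEpos, hEeq]

lemma Gfun_pi2 : Gfun (π/2) = 0 := by
  unfold Gfun
  have h2 : 2 * (π/2) = π := by ring
  rw [h2, Real.sin_pi, Real.sin_pi_div_two, Real.cos_pi_div_two]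
  ring

/-- Key positivity: `G > 0` on `(0, π/2)`. -/
lemma Gfun_pos {t : ℝ} (h0 : 0 < t) (htp : t < π/2) : 0 < Gfun t := by
  have hπ1 : (3.141592 : ℝ) < π := pi_gt_d6
  have hπ2 : π < 3.141593 := pi_lt_d6
  rcases le_or_gt t 1.4 with h14 | h14
  · exact Gpos_low h0 h14
  · -- use strict concavity on [1.4, π/2]
    have hconc : StrictConcaveOn ℝ (Icc (1.4:ℝ) (π/2)) Gfun := by
      apply strictConcaveOn_of_deriv2_neg (convex_Icc _ _)
      · apply Continuous.continuousOn
        unfold Gfun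
        continuity
      · intro x hx
        rw [interior_Icc] at hx
        have hd1 : deriv Gfun = G1fun := funext fun y => (Gfun_hasDeriv y).deriv
        show deriv (deriv Gfun) x < 0
        rw [hd1, (G1fun_hasDeriv x).deriv]
        exact G2neg hx.1.le (by nlinarith [hx.2, Real.pi_lt_d20])
    have hdpos : (0:ℝ) < π/2 - 1.4 := by nlinarith
    set a : ℝ := (π/2 - t)/(π/2 - 1.4) with ha_def
    set b : ℝ := (t - 1.4)/(π/2 - 1.4) with hb_def
    have ha : 0 < a := div_pos (by linarith) hdpos
    have hb : 0 < b := div_pos (by linarith) hdpos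
    have hab : a + b = 1 := by
      rw [ha_def, hb_def, ← add_div,
        show π/2 - t + (t - 1.4) = π/2 - 1.4 by ring]
      exact div_self (ne_of_gt hdpos)
    have hmem1 : (1.4:ℝ) ∈ Icc (1.4:ℝ) (π/2) := ⟨le_refl _, by linarith⟩
    have hmem2 : π/2 ∈ Icc (1.4:ℝ) (π/2) := ⟨by linarith, le_refl _⟩
    have hne : (1.4:ℝ) ≠ π/2 := ne_of_lt (by linarith)
    have key := hconc.2 hmem1 hmem2 hne ha hb hab
    have hcomb : a • (1.4:ℝ) + b • (π/2) = t := by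
      rw [smul_eq_mul, smul_eq_mul, ha_def, hb_def, div_mul_eq_mul_div, div_mul_eq_mul_div,
        ← add_div, show (π/2 - t)*1.4 + (t - 1.4)*(π/2) = t*(π/2 - 1.4) by ring,
        mul_div_assoc, div_self (ne_of_gt hdpos), mul_one]
    rw [hcomb, Gfun_pi2] at key
    simp only [smul_eq_mul, mul_zero, add_zero] at key
    have hG14 : 0 < Gfun 1.4 := Gpos_low (by norm_num) (le_refl _)
    nlinarith [key, mul_pos ha hG14]

theorem stmt9 (p : ℝ) (hp : p ≤ -1 ∨ 0 < p) :
    (∀ t ∈ Set.Ioo 0 (Real.pi/2),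
      (2*p + (p+3)*Real.cos t) / ((3*p+1) + 2*Real.cos t) < Real.sin t / t) ↔
    (0 < p ∧ p ≤ 1/(Real.pi - 3)) := by
  have hπ1 : (3.141592 : ℝ) < π := pi_gt_d6
  have hπ2 : π < 3.141593 := pi_lt_d6
  have hπ3 : (0:ℝ) < π - 3 := by linarith
  constructor
  · intro h
    have hp0 : 0 < p := by
      rcases hp with hneg | hpos
      · exfalso
        have h1mem : (1:ℝ) ∈ Set.Ioo (0:ℝ) (π/2) := ⟨one_pos, by linarith⟩
        have h1 := h 1 h1mem
        rw [div_one] at h1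
        have hc1 : Real.cos 1 ≤ 1 - 1/2 + 1/24 := by
          have := cos_le4 (le_of_lt one_pos)
          norm_num at this ⊢
          linarith
        have hD : (3*p+1) + 2*Real.cos 1 < 0 := by linarith
        have h2 := (div_lt_iff_of_neg hD).mp h1
        have hcusa : 3 * Real.sin 1 < 1 * (2 + Real.cos 1) := cusa one_pos (by norm_num)
        have h3 : 3*(2*p + (p+3)*Real.cos 1) ≤ (2 + Real.cos 1)*((3*p+1) + 2*Real.cos 1) := by
          nlinarith [sq_nonneg (1 - Real.cos 1)]
        nlinarith [mul_pos (show (0:ℝ) < 2 + Real.cos 1 - 3*Real.sin 1 by linarith)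
          (show (0:ℝ) < -((3*p+1) + 2*Real.cos 1) by linarith)]
      · exact hpos
    refine ⟨hp0, ?_⟩
    by_contra hgt
    push_neg at hgt
    have hp1 : 1 < p * (π - 3) := (div_lt_iff₀ hπ3).mp hgt
    set F : ℝ → ℝ := fun t => Real.sin t * ((3*p+1) + 2*Real.cos t) - t*(2*p + (p+3)*Real.cos t)
      with hF_def
    have hFcont : Continuous F := by
      rw [hF_def]; continuity
    have hFpi2 : F (π/2) < 0 := by
      rw [hF_def]
      simp only [Real.sin_pi_div_two, Real.cos_pi_div_two]
      nlinarith
    have hopen : IsOpen {t : ℝ | F t < 0} := isOpen_lt hFcont continuous_const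
    obtain ⟨ε, hε, hball⟩ := Metric.isOpen_iff.mp hopen (π/2) hFpi2
    set δ : ℝ := min ε 1 / 2 with hδ_def
    have hδ0 : 0 < δ := by
      rw [hδ_def]; positivity
    have hδε : δ < ε := by
      rw [hδ_def]
      rcases le_total ε 1 with hc | hc
      · simp [min_eq_left hc]; linarith
      · simp [min_eq_right hc]; linarith
    have hδ1 : δ ≤ 1/2 := by
      rw [hδ_def]
      have : min ε 1 ≤ 1 := min_le_right _ _
      linarith
    set t₀ : ℝ := π/2 - δ with ht₀_def
    have ht₀mem : t₀ ∈ Metric.ball (π/2) ε := by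
      rw [Metric.mem_ball, Real.dist_eq, ht₀_def]
      rw [abs_of_nonpos (by linarith)]
      linarith
    have hFt₀ : F t₀ < 0 := hball ht₀mem
    have ht₀0 : 0 < t₀ := by rw [ht₀_def]; linarith
    have ht₀p : t₀ < π/2 := by rw [ht₀_def]; linarith
    have hcos : 0 < Real.cos t₀ := Real.cos_pos_of_mem_Ioo ⟨by linarith, ht₀p⟩
    have hD : 0 < (3*p+1) + 2*Real.cos t₀ := by linarith
    have ht := h t₀ ⟨ht₀0, ht₀p⟩
    rw [div_lt_div_iff₀ hD ht₀0] at ht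
    rw [hF_def] at hFt₀
    simp only at hFt₀
    linarith
  · rintro ⟨hp0, hpP⟩ t ⟨ht0, htp⟩
    have hcos : 0 < Real.cos t := Real.cos_pos_of_mem_Ioo ⟨by linarith, htp⟩
    have hD : 0 < (3*p+1) + 2*Real.cos t := by linarith
    rw [div_lt_div_iff₀ hD ht0]
    have hG := Gfun_pos ht0 htp
    simp only [Gfun, Real.sin_two_mul] at hG
    have hA : 3*Real.sin t < t*(2 + Real.cos t) := cusa ht0 (by nlinarith)
    have hpπ : p * (π - 3) ≤ 1 := (le_div_iff₀ hπ3).mp hpP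
    nlinarith [hG, mul_nonneg (show (0:ℝ) ≤ 1 - p*(π-3) by linarith)
      (show (0:ℝ) ≤ t*(2 + Real.cos t) - 3*Real.sin t by linarith), hπ3]
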